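/- Let K be a commutative Q-algebra, z = (z_1,...,z_n) commuting variables, and H(z) ∈ K[[z]]^n of order ≥ 2. With F_t(z) = z − tH(z) and G_t(z) = F_t^{-1}(z) = z + ∑_{m≥1} t^m N_[m](z), the inversion formula N_[m](z) = ∑_{I ∈ C_m} (1/π_u(I)) ψ^I z holds for every m ≥ 1, where ψ_k = [((JH)^{k-1}H) ∂/∂z] and ψ^I denotes the composition ψ_{i_1} ∘ ··· ∘ ψ_{i_k} of these derivations applied to the vector z componentwise. -/

import Mathlib

noncomputable section

variable {K : Type*} [CommRing K] [Algebra ℚ K] {n : ℕ}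

/-- The formal partial derivative `∂/∂z_j` on `K[[z_1,...,z_n]]`. -/
def pd (j : Fin n) (f : MvPowerSeries (Fin n) K) : MvPowerSeries (Fin n) K :=
  fun e => (e j + 1) • MvPowerSeries.coeff (R := K) (e + Finsupp.single j 1) f

/-- `π_u(I) = ∏_{j=1}^{k} (i_1 + ... + i_j)` for a composition given as a list. -/
def piu (l : List ℕ) : ℕ :=
  ((List.range l.length).map fun j => (l.take (j + 1)).sum).prod

/-- The coefficient of `z^e` in the substitution `f(g_1,...,g_n)` of power series with
coefficients in `R = K[[t]]`. -/
def substCoeff (f : MvPowerSeries (Fin n) (PowerSeries K))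
    (g : Fin n → MvPowerSeries (Fin n) (PowerSeries K)) (e : Fin n →₀ ℕ) :
    PowerSeries K :=
  ∑ d ∈ Finset.Iic (Finsupp.equivFunOnFinite.symm
      fun _ : Fin n => (e.sum fun _ k => k)),
    MvPowerSeries.coeff (R := PowerSeries K) d f *
      MvPowerSeries.coeff (R := PowerSeries K) e (∏ i, g i ^ d i)

/-- The components of `F_t(z) = z - tH(z)`, as elements of `K[[t]][[z]]`. -/
def Fcomp (H : Fin n → MvPowerSeries (Fin n) K) (i : Fin n) :
    MvPowerSeries (Fin n) (PowerSeries K) :=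
  MvPowerSeries.X i -
    MvPowerSeries.C (σ := Fin n) (R := PowerSeries K) PowerSeries.X *
      MvPowerSeries.map (σ := Fin n) (PowerSeries.C (R := K)) (H i)

/-- The power series `N_t(z)_i = ∑_{m≥1} t^{m-1} N_[m](z)_i`. -/
def Ntser (N : ℕ → Fin n → MvPowerSeries (Fin n) K) (i : Fin n) :
    MvPowerSeries (Fin n) (PowerSeries K) :=
  fun e => PowerSeries.mk fun k => MvPowerSeries.coeff (R := K) e (N (k + 1) i)

/-- The components of `G_t(z) = z + tN_t(z)`. -/
def Gcomp (N : ℕ → Fin n → MvPowerSeries (Fin n) K) (i : Fin n) :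
    MvPowerSeries (Fin n) (PowerSeries K) :=
  MvPowerSeries.X i +
    MvPowerSeries.C (σ := Fin n) (R := PowerSeries K) PowerSeries.X * Ntser N i

/-- The derivation `ψ_k = [((JH)^{k-1}H) ∂/∂z]` on `K[[z]]`. -/
def psiOp (H : Fin n → MvPowerSeries (Fin n) K) (k : ℕ) :
    MvPowerSeries (Fin n) K → MvPowerSeries (Fin n) K :=
  fun f => ∑ j,
    ((Matrix.of fun a b => pd b (H a)) ^ (k - 1)).mulVec H j * pd j f

namespace Stmt17

/-- total degree of an exponent -/
def deg (e : Fin n →₀ ℕ) : ℕ := e.sum fun _ k => k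

lemma deg_eq (e : Fin n →₀ ℕ) : deg e = ∑ j, e j := Finsupp.sum_fintype _ _ (fun _ => rfl)

lemma le_deg (e : Fin n →₀ ℕ) (j : Fin n) : e j ≤ deg e := by
  rw [deg_eq]; exact Finset.single_le_sum (fun _ _ => Nat.zero_le _) (Finset.mem_univ j)

lemma deg_add (u v : Fin n →₀ ℕ) : deg (u + v) = deg u + deg v := by
  simp [deg_eq, Finset.sum_add_distrib]

lemma deg_zero : deg (0 : Fin n →₀ ℕ) = 0 := by simp [deg_eq]

lemma deg_eq_zero {e : Fin n →₀ ℕ} (h : deg e = 0) : e = 0 := by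
  rw [deg_eq, Finset.sum_eq_zero_iff] at h
  ext j; exact h j (Finset.mem_univ j)

lemma deg_single (j : Fin n) (k : ℕ) : deg (Finsupp.single j k) = k := by
  simp [deg, Finsupp.sum_single_index]

/-- the bounding box used in `substCoeff` -/
def box (e : Fin n →₀ ℕ) : Fin n →₀ ℕ := Finsupp.equivFunOnFinite.symm fun _ => deg e

lemma box_apply (e : Fin n →₀ ℕ) (j : Fin n) : box e j = deg e := rfl

lemma le_box_of_deg_le {d e : Fin n →₀ ℕ} (h : deg d ≤ deg e) : d ≤ box e :=
  Finsupp.le_def.2 fun j => le_trans (le_deg d j) (by rwa [box_apply])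

lemma deg_lt_of_not_le_box {d e : Fin n →₀ ℕ} (h : ¬ d ≤ box e) : deg e < deg d := by
  by_contra hc
  exact h (le_box_of_deg_le (le_of_not_gt hc))

/-- order at least `k` -/
def ordGE {R : Type*} [CommRing R] (k : ℕ) (x : MvPowerSeries (Fin n) R) : Prop :=
  ∀ e : Fin n →₀ ℕ, deg e < k → MvPowerSeries.coeff (R := R) e x = 0

lemma ordGE_mono {R : Type*} [CommRing R] {k l : ℕ} (h : l ≤ k)
    {x : MvPowerSeries (Fin n) R} (hx : ordGE k x) : ordGE l x :=
  fun e he => hx e (lt_of_lt_of_le he h)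

lemma ordGE_mul {R : Type*} [CommRing R] {a b : ℕ} {x y : MvPowerSeries (Fin n) R}
    (hx : ordGE a x) (hy : ordGE b y) : ordGE (a + b) (x * y) := by
  intro e he
  rw [MvPowerSeries.coeff_mul]
  refine Finset.sum_eq_zero fun p hp => ?_
  rw [Finset.HasAntidiagonal.mem_antidiagonal] at hp
  have : deg p.1 + deg p.2 < a + b := by rw [← deg_add, hp]; exact he
  rcases lt_or_ge (deg p.1) a with h1 | h1
  · rw [hx p.1 h1, zero_mul]
  · rw [hy p.2 (by omega), mul_zero]

lemma ordGE_pow {R : Type*} [CommRing R] {x : MvPowerSeries (Fin n) R}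
    (hx : ordGE 1 x) (k : ℕ) : ordGE k (x ^ k) := by
  induction k with
  | zero => intro e he; omega
  | succ k ih =>
      rw [pow_succ]
      exact ordGE_mul ih hx

lemma ordGE_prod_pow {R : Type*} [CommRing R] {g : Fin n → MvPowerSeries (Fin n) R}
    (hg : ∀ j, ordGE 1 (g j)) (d : Fin n →₀ ℕ) : ordGE (deg d) (∏ j, g j ^ d j) := by
  rw [deg_eq]
  have : ∀ s : Finset (Fin n), ordGE (∑ j ∈ s, d j) (∏ j ∈ s, g j ^ d j) := by
    intro s
    induction s using Finset.induction with
    | empty => intro e he; simp at he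
    | insert _ _ hj ih =>
        rw [Finset.sum_insert hj, Finset.prod_insert hj]
        exact ordGE_mul (ordGE_pow (hg _) _) ih
  exact this Finset.univ


section Chunk2
variable {K : Type*} [CommRing K] [Algebra ℚ K] {n : ℕ}

set_option linter.unusedSectionVars false

/-- substitution of `f ∈ K[[z]]` into a tuple `g` over `R = K[[t]]`, coefficientwise -/
def sub (g : Fin n → MvPowerSeries (Fin n) (PowerSeries K))
    (f : MvPowerSeries (Fin n) K) : MvPowerSeries (Fin n) (PowerSeries K) :=
  fun e => ∑ d ∈ Finset.Iic (box e),
    PowerSeries.C (R := K) (MvPowerSeries.coeff (R := K) d f) *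
      MvPowerSeries.coeff (R := PowerSeries K) e (∏ j, g j ^ d j)

lemma coeff_sub (g : Fin n → MvPowerSeries (Fin n) (PowerSeries K))
    (f : MvPowerSeries (Fin n) K) (e : Fin n →₀ ℕ) :
    MvPowerSeries.coeff (R := PowerSeries K) e (sub g f)
      = ∑ d ∈ Finset.Iic (box e),
        PowerSeries.C (R := K) (MvPowerSeries.coeff (R := K) d f) *
          MvPowerSeries.coeff (R := PowerSeries K) e (∏ j, g j ^ d j) := rfl

/-- the truncation in `sub` is flexible -/
lemma coeff_sub_eq_sum (g : Fin n → MvPowerSeries (Fin n) (PowerSeries K))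
    (hg : ∀ j, ordGE 1 (g j)) (f : MvPowerSeries (Fin n) K) (e : Fin n →₀ ℕ)
    {S : Finset (Fin n →₀ ℕ)} (hS : ∀ d, deg d ≤ deg e → d ∈ S) :
    MvPowerSeries.coeff (R := PowerSeries K) e (sub g f)
      = ∑ d ∈ S,
        PowerSeries.C (R := K) (MvPowerSeries.coeff (R := K) d f) *
          MvPowerSeries.coeff (R := PowerSeries K) e (∏ j, g j ^ d j) := by
  rw [coeff_sub]
  have key : ∀ d : Fin n →₀ ℕ, deg e < deg d →
      PowerSeries.C (R := K) (MvPowerSeries.coeff (R := K) d f) *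
        MvPowerSeries.coeff (R := PowerSeries K) e (∏ j, g j ^ d j) = 0 := by
    intro d hd
    rw [ordGE_prod_pow hg d e hd, mul_zero]
  have h1 : ∀ x ∈ Finset.Iic (box e) ∪ S, x ∉ Finset.Iic (box e) →
      PowerSeries.C (R := K) (MvPowerSeries.coeff (R := K) x f) *
        MvPowerSeries.coeff (R := PowerSeries K) e (∏ j, g j ^ x j) = 0 := by
    intro d _ hd
    exact key d (deg_lt_of_not_le_box (by simpa using hd))
  have h2 : ∀ x ∈ Finset.Iic (box e) ∪ S, x ∉ S →
      PowerSeries.C (R := K) (MvPowerSeries.coeff (R := K) x f) *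
        MvPowerSeries.coeff (R := PowerSeries K) e (∏ j, g j ^ x j) = 0 := by
    intro d _ hd
    refine key d ?_
    by_contra hc
    exact hd (hS d (le_of_not_gt hc))
  exact (Finset.sum_subset Finset.subset_union_left h1).trans
    (Finset.sum_subset Finset.subset_union_right h2).symm

lemma sub_add (g : Fin n → MvPowerSeries (Fin n) (PowerSeries K))
    (f₁ f₂ : MvPowerSeries (Fin n) K) :
    sub g (f₁ + f₂) = sub g f₁ + sub g f₂ := by
  refine MvPowerSeries.ext fun e => ?_
  rw [map_add (MvPowerSeries.coeff (R := PowerSeries K) e), coeff_sub, coeff_sub, coeff_sub,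
    ← Finset.sum_add_distrib]
  refine Finset.sum_congr rfl fun d _ => ?_
  rw [map_add, map_add, add_mul]

lemma sub_sum {ι : Type*} (g : Fin n → MvPowerSeries (Fin n) (PowerSeries K))
    (s : Finset ι) (f : ι → MvPowerSeries (Fin n) K) :
    sub g (∑ i ∈ s, f i) = ∑ i ∈ s, sub g (f i) := by
  refine MvPowerSeries.ext fun e => ?_
  rw [map_sum (MvPowerSeries.coeff (R := PowerSeries K) e) (fun i => sub g (f i)) s]
  simp only [coeff_sub, map_sum, Finset.sum_mul]
  rw [Finset.sum_comm]


/-- the `t^m`-slice of an element of `K[[t]][[z]]` -/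
def slice (m : ℕ) (x : MvPowerSeries (Fin n) (PowerSeries K)) :
    MvPowerSeries (Fin n) K :=
  fun e => PowerSeries.coeff (R := K) m (x e)

lemma coeff_slice (m : ℕ) (x : MvPowerSeries (Fin n) (PowerSeries K)) (e : Fin n →₀ ℕ) :
    MvPowerSeries.coeff (R := K) e (slice m x)
      = PowerSeries.coeff (R := K) m (MvPowerSeries.coeff (R := PowerSeries K) e x) := rfl

lemma slice_add (m : ℕ) (x y : MvPowerSeries (Fin n) (PowerSeries K)) :
    slice m (x + y) = slice m x + slice m y := by
  refine MvPowerSeries.ext fun e => ?_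
  rw [coeff_slice, map_add (MvPowerSeries.coeff (R := K) e), map_add (MvPowerSeries.coeff e),
    map_add, coeff_slice, coeff_slice]

lemma slice_sum {ι : Type*} (s : Finset ι) (m : ℕ)
    (x : ι → MvPowerSeries (Fin n) (PowerSeries K)) :
    slice m (∑ i ∈ s, x i) = ∑ i ∈ s, slice m (x i) := by
  refine MvPowerSeries.ext fun e => ?_
  simp only [coeff_slice, map_sum]

lemma slice_mul (m : ℕ) (x y : MvPowerSeries (Fin n) (PowerSeries K)) :
    slice m (x * y) = ∑ p ∈ Finset.HasAntidiagonal.antidiagonal m, slice p.1 x * slice p.2 y := by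
  refine MvPowerSeries.ext fun e => ?_
  rw [coeff_slice, MvPowerSeries.coeff_mul, map_sum]
  simp only [PowerSeries.coeff_mul]
  rw [Finset.sum_comm, map_sum]
  refine Finset.sum_congr rfl fun q _ => ?_
  rw [MvPowerSeries.coeff_mul]
  exact Finset.sum_congr rfl fun p _ => rfl

/-- formal `d/dt` applied coefficientwise -/
def Dt (x : MvPowerSeries (Fin n) (PowerSeries K)) :
    MvPowerSeries (Fin n) (PowerSeries K) :=
  fun e => PowerSeries.derivative K (x e)

lemma coeff_Dt (x : MvPowerSeries (Fin n) (PowerSeries K)) (e : Fin n →₀ ℕ) :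
    MvPowerSeries.coeff (R := PowerSeries K) e (Dt x)
      = PowerSeries.derivative K (MvPowerSeries.coeff (R := PowerSeries K) e x) := rfl

lemma Dt_add (x y : MvPowerSeries (Fin n) (PowerSeries K)) :
    Dt (x + y) = Dt x + Dt y := by
  refine MvPowerSeries.ext fun e => ?_
  rw [coeff_Dt, map_add (MvPowerSeries.coeff (R := PowerSeries K) e), map_add,
    map_add (MvPowerSeries.coeff (R := PowerSeries K) e), coeff_Dt, coeff_Dt]

lemma Dt_sum {ι : Type*} (s : Finset ι) (x : ι → MvPowerSeries (Fin n) (PowerSeries K)) :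
    Dt (∑ i ∈ s, x i) = ∑ i ∈ s, Dt (x i) := by
  refine MvPowerSeries.ext fun e => ?_
  simp only [coeff_Dt, map_sum]

lemma Dt_mul (x y : MvPowerSeries (Fin n) (PowerSeries K)) :
    Dt (x * y) = Dt x * y + x * Dt y := by
  refine MvPowerSeries.ext fun e => ?_
  rw [coeff_Dt, MvPowerSeries.coeff_mul, map_sum, map_add (MvPowerSeries.coeff (R := PowerSeries K) e),
    MvPowerSeries.coeff_mul, MvPowerSeries.coeff_mul, ← Finset.sum_add_distrib]
  refine Finset.sum_congr rfl fun p _ => ?_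
  rw [Derivation.leibniz, coeff_Dt, coeff_Dt, smul_eq_mul, smul_eq_mul, add_comm,
    mul_comm (MvPowerSeries.coeff (R := PowerSeries K) p.2 y)]

lemma Dt_one : Dt (1 : MvPowerSeries (Fin n) (PowerSeries K)) = 0 := by
  refine MvPowerSeries.ext fun e => ?_
  rw [coeff_Dt, map_zero, MvPowerSeries.coeff_one]
  split <;> simp

lemma slice_Dt (m : ℕ) (x : MvPowerSeries (Fin n) (PowerSeries K)) :
    slice m (Dt x) = (m + 1) • slice (m + 1) x := by
  refine MvPowerSeries.ext fun e => ?_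
  rw [coeff_slice, coeff_Dt, PowerSeries.coeff_derivative, map_nsmul, coeff_slice,
    nsmul_eq_mul, mul_comm]
  push_cast
  ring

lemma Dt_prod (y : Fin n → MvPowerSeries (Fin n) (PowerSeries K)) (s : Finset (Fin n)) :
    Dt (∏ l ∈ s, y l) = ∑ j ∈ s, Dt (y j) * ∏ l ∈ s.erase j, y l := by
  induction s using Finset.induction with
  | empty => simp [Dt_one]
  | @insert a s ha ih =>
      rw [Finset.prod_insert ha, Dt_mul, ih, Finset.sum_insert ha, Finset.erase_insert ha,
        Finset.mul_sum]
      congr 1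
      refine Finset.sum_congr rfl fun j hj => ?_
      rw [Finset.erase_insert_of_ne (fun h : a = j => ha (by rw [h]; exact hj)),
        Finset.prod_insert (fun h => ha (Finset.mem_of_mem_erase h))]
      ring

lemma Dt_pow_succ (x : MvPowerSeries (Fin n) (PowerSeries K)) (k : ℕ) :
    Dt (x ^ (k + 1)) = (k + 1) • (x ^ k * Dt x) := by
  induction k with
  | zero => simp only [zero_add, pow_one, pow_zero, one_mul, one_smul]
  | succ k ih =>
      rw [pow_succ, Dt_mul, ih, nsmul_eq_mul, nsmul_eq_mul]
      push_cast
      ring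

lemma Dt_prod_pow (g : Fin n → MvPowerSeries (Fin n) (PowerSeries K)) (d : Fin n →₀ ℕ) :
    Dt (∏ j, g j ^ d j)
      = ∑ j, (d j) • (Dt (g j) *
          ∏ l, g l ^ (((d - Finsupp.single j 1) : Fin n →₀ ℕ) l)) := by
  rw [Dt_prod]
  refine Finset.sum_congr rfl fun j _ => ?_
  rcases Nat.eq_zero_or_pos (d j) with h | h
  · rw [h, pow_zero, Dt_one, zero_mul, zero_smul]
  · obtain ⟨k, hk⟩ : ∃ k, d j = k + 1 := ⟨d j - 1, by omega⟩
    rw [hk, Dt_pow_succ, smul_mul_assoc]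
    congr 1
    have herase : ∀ l ∈ Finset.univ.erase j,
        g l ^ (((d - Finsupp.single j 1) : Fin n →₀ ℕ) l) = g l ^ d l := by
      intro l hl
      have hlj : l ≠ j := Finset.ne_of_mem_erase hl
      rw [Finsupp.tsub_apply, Finsupp.single_apply, if_neg (fun hh => hlj hh.symm), Nat.sub_zero]
    rw [← Finset.mul_prod_erase Finset.univ
        (fun l => g l ^ (((d - Finsupp.single j 1) : Fin n →₀ ℕ) l)) (Finset.mem_univ j),
      Finset.prod_congr rfl herase, Finsupp.tsub_apply, Finsupp.single_apply, if_pos rfl, hk,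
      Nat.add_sub_cancel]
    ring

end Chunk2

section Chunk3
variable {K : Type*} [CommRing K] [Algebra ℚ K] {n : ℕ}

set_option linter.unusedSectionVars false

lemma coeff_pd (j : Fin n) (f : MvPowerSeries (Fin n) K) (d : Fin n →₀ ℕ) :
    MvPowerSeries.coeff (R := K) d (pd j f)
      = (d j + 1) • MvPowerSeries.coeff (R := K) (d + Finsupp.single j 1) f := rfl

lemma substCoeff_eq (f : MvPowerSeries (Fin n) (PowerSeries K))
    (g : Fin n → MvPowerSeries (Fin n) (PowerSeries K)) (e : Fin n →₀ ℕ) :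
    substCoeff f g e = ∑ d ∈ Finset.Iic (box e),
      MvPowerSeries.coeff (R := PowerSeries K) d f *
        MvPowerSeries.coeff (R := PowerSeries K) e (∏ i, g i ^ d i) := rfl

lemma box_zero : box (0 : Fin n →₀ ℕ) = 0 := by
  ext j
  rw [box_apply, deg_zero, Finsupp.coe_zero, Pi.zero_apply]

lemma Iic_zero : Finset.Iic (0 : Fin n →₀ ℕ) = {0} := by
  ext d
  simp [Finset.mem_Iic, le_zero_iff]

lemma prod_pow_single {R : Type*} [CommRing R] (g : Fin n → MvPowerSeries (Fin n) R)
    (i : Fin n) : (∏ j, g j ^ (Finsupp.single i 1) j) = g i := by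
  rw [Finset.prod_eq_single i
    (fun b _ hb => by rw [Finsupp.single_apply, if_neg (fun h => hb h.symm), pow_zero])
    (fun h => absurd (Finset.mem_univ i) h), Finsupp.single_apply, if_pos rfl, pow_one]

lemma X_mul_cancel {q r : PowerSeries K} (h : PowerSeries.X * q = PowerSeries.X * r) :
    q = r := by
  ext k
  rw [← PowerSeries.coeff_succ_X_mul, h, PowerSeries.coeff_succ_X_mul]

section WithNH

variable (H : Fin n → MvPowerSeries (Fin n) K) (N : ℕ → Fin n → MvPowerSeries (Fin n) K)

lemma coeff_Gcomp (i : Fin n) (e : Fin n →₀ ℕ) :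
    MvPowerSeries.coeff (R := PowerSeries K) e (Gcomp N i)
      = MvPowerSeries.coeff (R := PowerSeries K) e (MvPowerSeries.X i)
        + PowerSeries.X * MvPowerSeries.coeff (R := PowerSeries K) e (Ntser N i) := by
  rw [Gcomp, map_add, MvPowerSeries.coeff_C_mul]

lemma coeff_zero_Gcomp
    (hGF : ∀ (i : Fin n) (e : Fin n →₀ ℕ),
      substCoeff (Gcomp N i) (Fcomp H) e
        = MvPowerSeries.coeff (R := PowerSeries K) e (MvPowerSeries.X i)) (i : Fin n) :
    MvPowerSeries.coeff (R := PowerSeries K) 0 (Gcomp N i) = 0 := by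
  have h := hGF i 0
  rw [substCoeff_eq, box_zero, Iic_zero, Finset.sum_singleton] at h
  simp only [Finsupp.coe_zero, Pi.zero_apply, pow_zero, Finset.prod_const_one,
    MvPowerSeries.coeff_zero_one, mul_one, MvPowerSeries.coeff_zero_X] at h
  exact h

lemma coeff_zero_Ntser
    (hGF : ∀ (i : Fin n) (e : Fin n →₀ ℕ),
      substCoeff (Gcomp N i) (Fcomp H) e
        = MvPowerSeries.coeff (R := PowerSeries K) e (MvPowerSeries.X i)) (i : Fin n) :
    MvPowerSeries.coeff (R := PowerSeries K) 0 (Ntser N i) = 0 := by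
  have h := coeff_zero_Gcomp H N hGF i
  rw [coeff_Gcomp, MvPowerSeries.coeff_zero_X, zero_add] at h
  have h2 : PowerSeries.X * MvPowerSeries.coeff (R := PowerSeries K) 0 (Ntser N i)
      = PowerSeries.X * 0 := by rw [h, mul_zero]
  exact X_mul_cancel h2

lemma ordGE_one_Gcomp
    (hGF : ∀ (i : Fin n) (e : Fin n →₀ ℕ),
      substCoeff (Gcomp N i) (Fcomp H) e
        = MvPowerSeries.coeff (R := PowerSeries K) e (MvPowerSeries.X i)) (j : Fin n) :
    ordGE 1 (Gcomp N j) := by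
  intro e he
  have : e = 0 := deg_eq_zero (by omega)
  rw [this]
  exact coeff_zero_Gcomp H N hGF j

/-- the master relation `N_t = H ∘ G` -/
lemma master (hH : ∀ i (e : Fin n →₀ ℕ), (e.sum fun _ k => k) ≤ 1 →
      MvPowerSeries.coeff (R := K) e (H i) = 0)
    (hFG : ∀ (i : Fin n) (e : Fin n →₀ ℕ),
      substCoeff (Fcomp H i) (Gcomp N) e
        = MvPowerSeries.coeff (R := PowerSeries K) e (MvPowerSeries.X i))
    (hGF : ∀ (i : Fin n) (e : Fin n →₀ ℕ),
      substCoeff (Gcomp N i) (Fcomp H) e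
        = MvPowerSeries.coeff (R := PowerSeries K) e (MvPowerSeries.X i))
    (i : Fin n) : Ntser N i = sub (Gcomp N) (H i) := by
  refine MvPowerSeries.ext fun e => ?_
  rcases Nat.eq_zero_or_pos (deg e) with hdeg | hdeg
  · have he : e = 0 := deg_eq_zero hdeg
    subst he
    rw [coeff_zero_Ntser H N hGF i, coeff_sub, box_zero, Iic_zero, Finset.sum_singleton,
      hH i 0 (by rw [Finsupp.sum_zero_index]; omega), map_zero, zero_mul]
  · have h := hFG i e
    rw [substCoeff_eq] at h
    simp only [Fcomp, map_sub, MvPowerSeries.coeff_C_mul, MvPowerSeries.coeff_map, sub_mul,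
      mul_assoc] at h
    rw [Finset.sum_sub_distrib, ← Finset.mul_sum, ← coeff_sub] at h
    simp only [MvPowerSeries.coeff_X, ite_mul, zero_mul, one_mul] at h
    rw [Finset.sum_ite_eq' (Finset.Iic (box e)) (Finsupp.single i 1)
        (fun d => MvPowerSeries.coeff (R := PowerSeries K) e (∏ j, Gcomp N j ^ d j)),
      if_pos (Finset.mem_Iic.2 (le_box_of_deg_le (by rw [deg_single]; omega))),
      prod_pow_single, coeff_Gcomp] at h
    rw [show (if e = Finsupp.single i 1 then (1 : PowerSeries K) else 0)
        = MvPowerSeries.coeff (R := PowerSeries K) e (MvPowerSeries.X i) from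
      (MvPowerSeries.coeff_X e i).symm] at h
    have h2 : PowerSeries.X * MvPowerSeries.coeff (R := PowerSeries K) e (Ntser N i)
        = PowerSeries.X * MvPowerSeries.coeff (R := PowerSeries K) e (sub (Gcomp N) (H i)) := by
      linear_combination h
    exact X_mul_cancel h2

lemma Gcomp_eq (hH : ∀ i (e : Fin n →₀ ℕ), (e.sum fun _ k => k) ≤ 1 →
      MvPowerSeries.coeff (R := K) e (H i) = 0)
    (hFG : ∀ (i : Fin n) (e : Fin n →₀ ℕ),
      substCoeff (Fcomp H i) (Gcomp N) e
        = MvPowerSeries.coeff (R := PowerSeries K) e (MvPowerSeries.X i))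
    (hGF : ∀ (i : Fin n) (e : Fin n →₀ ℕ),
      substCoeff (Gcomp N i) (Fcomp H) e
        = MvPowerSeries.coeff (R := PowerSeries K) e (MvPowerSeries.X i))
    (i : Fin n) :
    Gcomp N i = MvPowerSeries.X i
      + MvPowerSeries.C (σ := Fin n) (R := PowerSeries K) PowerSeries.X * sub (Gcomp N) (H i) := by
  rw [Gcomp, master H N hH hFG hGF i]

end WithNH

lemma slice_succ_t_mul (m : ℕ) (x : MvPowerSeries (Fin n) (PowerSeries K)) :
    slice (m + 1) (MvPowerSeries.C (σ := Fin n) (R := PowerSeries K) PowerSeries.X * x) = slice m x := by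
  refine MvPowerSeries.ext fun e => ?_
  rw [coeff_slice, coeff_slice, MvPowerSeries.coeff_C_mul, PowerSeries.coeff_succ_X_mul]

lemma slice_zero_t_mul (x : MvPowerSeries (Fin n) (PowerSeries K)) :
    slice 0 (MvPowerSeries.C (σ := Fin n) (R := PowerSeries K) PowerSeries.X * x) = 0 := by
  refine MvPowerSeries.ext fun e => ?_
  rw [coeff_slice, MvPowerSeries.coeff_C_mul, PowerSeries.coeff_zero_X_mul, map_zero]

lemma Dt_t_mul (x : MvPowerSeries (Fin n) (PowerSeries K)) :
    Dt (MvPowerSeries.C (σ := Fin n) (R := PowerSeries K) PowerSeries.X * x)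
      = x + MvPowerSeries.C (σ := Fin n) (R := PowerSeries K) PowerSeries.X * Dt x := by
  refine MvPowerSeries.ext fun e => ?_
  rw [coeff_Dt, MvPowerSeries.coeff_C_mul, Derivation.leibniz, map_add,
    MvPowerSeries.coeff_C_mul, coeff_Dt, PowerSeries.derivative_X, smul_eq_mul,
    smul_eq_mul, mul_one, add_comm]

lemma Dt_X (i : Fin n) : Dt (MvPowerSeries.X i : MvPowerSeries (Fin n) (PowerSeries K)) = 0 := by
  refine MvPowerSeries.ext fun e => ?_
  rw [coeff_Dt, MvPowerSeries.coeff_X, map_zero]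
  split
  · exact Derivation.map_one_eq_zero _
  · exact map_zero _

lemma slice_zero_X (i : Fin n) :
    slice 0 (MvPowerSeries.X i : MvPowerSeries (Fin n) (PowerSeries K))
      = (MvPowerSeries.X i : MvPowerSeries (Fin n) K) := by
  refine MvPowerSeries.ext fun e => ?_
  rw [coeff_slice, MvPowerSeries.coeff_X, MvPowerSeries.coeff_X]
  split
  · exact PowerSeries.coeff_zero_one
  · exact map_zero _

lemma slice_zero_one : slice 0 (1 : MvPowerSeries (Fin n) (PowerSeries K)) = 1 := by
  refine MvPowerSeries.ext fun e => ?_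
  rw [coeff_slice, MvPowerSeries.coeff_one, MvPowerSeries.coeff_one]
  split
  · exact PowerSeries.coeff_zero_one
  · exact map_zero _

lemma slice_zero_mul (x y : MvPowerSeries (Fin n) (PowerSeries K)) :
    slice 0 (x * y) = slice 0 x * slice 0 y := by
  rw [slice_mul, Finset.Nat.antidiagonal_zero, Finset.sum_singleton]

lemma slice_zero_pow (x : MvPowerSeries (Fin n) (PowerSeries K)) (k : ℕ) :
    slice 0 (x ^ k) = slice 0 x ^ k := by
  induction k with
  | zero => rw [pow_zero, pow_zero, slice_zero_one]
  | succ k ih => rw [pow_succ, pow_succ, slice_zero_mul, ih]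

lemma slice_zero_prod_pow (g : Fin n → MvPowerSeries (Fin n) (PowerSeries K)) (d : Fin n →₀ ℕ) :
    slice 0 (∏ j, g j ^ d j) = ∏ j, slice 0 (g j) ^ d j := by
  classical
  induction (Finset.univ : Finset (Fin n)) using Finset.induction with
  | empty => rw [Finset.prod_empty, Finset.prod_empty, slice_zero_one]
  | @insert a s ha ih =>
      rw [Finset.prod_insert ha, Finset.prod_insert ha, slice_zero_mul, slice_zero_pow, ih]

end Chunk3

section Chunk4a
variable {K : Type*} [CommRing K] [Algebra ℚ K] {n : ℕ}

set_option linter.unusedSectionVars false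

lemma prod_X_pow (d : Fin n →₀ ℕ) :
    (∏ j, (MvPowerSeries.X j : MvPowerSeries (Fin n) K) ^ d j)
      = MvPowerSeries.monomial (R := K) d 1 := by
  classical
  simp only [MvPowerSeries.X_pow_eq]
  have main : ∀ s : Finset (Fin n),
      (∏ j ∈ s, MvPowerSeries.monomial (R := K) (Finsupp.single j (d j)) (1:K))
        = MvPowerSeries.monomial (R := K) (∑ j ∈ s, Finsupp.single j (d j)) 1 := by
    intro s
    induction s using Finset.induction with
    | empty =>
        rw [Finset.prod_empty, Finset.sum_empty]
        exact (MvPowerSeries.monomial_zero_one (R := K)).symm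
    | @insert a s ha ih =>
        rw [Finset.prod_insert ha, Finset.sum_insert ha, ih,
          MvPowerSeries.monomial_mul_monomial, one_mul]
  rw [main Finset.univ, Finsupp.univ_sum_single]

lemma sub_X (g : Fin n → MvPowerSeries (Fin n) (PowerSeries K))
    (hg0 : ∀ j, MvPowerSeries.coeff (R := PowerSeries K) 0 (g j) = 0) (i : Fin n) :
    sub g (MvPowerSeries.X i) = g i := by
  refine MvPowerSeries.ext fun e => ?_
  rw [coeff_sub]
  simp only [MvPowerSeries.coeff_X, apply_ite (PowerSeries.C (R := K)), map_one, map_zero, ite_mul,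
    zero_mul, one_mul]
  rw [Finset.sum_ite_eq' (Finset.Iic (box e)) (Finsupp.single i 1)
      (fun d => MvPowerSeries.coeff (R := PowerSeries K) e (∏ j, g j ^ d j))]
  rcases Nat.eq_zero_or_pos (deg e) with hdeg | hdeg
  · have he : e = 0 := deg_eq_zero hdeg
    subst he
    rw [if_neg, hg0 i]
    intro hmem
    have h1 := Finsupp.le_def.1 (Finset.mem_Iic.1 hmem) i
    rw [box_zero] at h1
    simp [Finsupp.single_apply] at h1
  · rw [if_pos (Finset.mem_Iic.2 (le_box_of_deg_le (by rw [deg_single]; omega))),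
      prod_pow_single]

lemma slice_zero_sub (g : Fin n → MvPowerSeries (Fin n) (PowerSeries K))
    (hg0 : ∀ j, slice 0 (g j) = MvPowerSeries.X j) (f : MvPowerSeries (Fin n) K) :
    slice 0 (sub g f) = f := by
  refine MvPowerSeries.ext fun e => ?_
  rw [coeff_slice, coeff_sub, map_sum]
  have key : ∀ d ∈ Finset.Iic (box e),
      PowerSeries.coeff (R := K) 0 (PowerSeries.C (R := K) (MvPowerSeries.coeff (R := K) d f) *
        MvPowerSeries.coeff (R := PowerSeries K) e (∏ j, g j ^ d j))
      = if e = d then MvPowerSeries.coeff (R := K) d f else 0 := by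
    intro d _
    rw [PowerSeries.coeff_C_mul]
    have h2 : PowerSeries.coeff (R := K) 0 (MvPowerSeries.coeff (R := PowerSeries K) e (∏ j, g j ^ d j))
        = MvPowerSeries.coeff (R := K) e (MvPowerSeries.monomial (R := K) d (1:K)) := by
      rw [← prod_X_pow]
      have h3 : (∏ j, (MvPowerSeries.X j : MvPowerSeries (Fin n) K) ^ d j)
          = slice 0 (∏ j, g j ^ d j) := by
        rw [slice_zero_prod_pow]
        exact Finset.prod_congr rfl fun j _ => by rw [hg0 j]
      rw [h3, coeff_slice]
    rw [h2, MvPowerSeries.coeff_monomial]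
    split
    · rw [mul_one]
    · rw [mul_zero]
  rw [Finset.sum_congr rfl key, Finset.sum_ite_eq (Finset.Iic (box e)) e
      (fun d => MvPowerSeries.coeff (R := K) d f),
    if_pos (Finset.mem_Iic.2 (le_box_of_deg_le le_rfl))]

lemma slice_succ_X (m : ℕ) (i : Fin n) :
    slice (m + 1) (MvPowerSeries.X i : MvPowerSeries (Fin n) (PowerSeries K)) = 0 := by
  refine MvPowerSeries.ext fun e => ?_
  rw [coeff_slice, MvPowerSeries.coeff_X, map_zero]
  split
  · rw [PowerSeries.coeff_one, if_neg (Nat.succ_ne_zero m)]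
  · exact map_zero _

lemma slice_zero_Gcomp (N : ℕ → Fin n → MvPowerSeries (Fin n) K) (j : Fin n) :
    slice 0 (Gcomp N j) = MvPowerSeries.X j := by
  rw [Gcomp, slice_add, slice_zero_X, slice_zero_t_mul, add_zero]

lemma slice_succ_Gcomp (N : ℕ → Fin n → MvPowerSeries (Fin n) K) (m : ℕ) (j : Fin n) :
    slice (m + 1) (Gcomp N j) = N (m + 1) j := by
  rw [Gcomp, slice_add, slice_succ_X, slice_succ_t_mul, zero_add]
  refine MvPowerSeries.ext fun e => ?_
  rw [coeff_slice]
  show PowerSeries.coeff (R := K) m (PowerSeries.mk fun k => MvPowerSeries.coeff (R := K) e (N (k + 1) j))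
      = MvPowerSeries.coeff (R := K) e (N (m + 1) j)
  rw [PowerSeries.coeff_mk]

end Chunk4a

section Chunk4b
variable {K : Type*} [CommRing K] [Algebra ℚ K] {n : ℕ}

set_option linter.unusedSectionVars false
set_option maxHeartbeats 1000000

lemma Dt_sub (g : Fin n → MvPowerSeries (Fin n) (PowerSeries K))
    (hg : ∀ j, ordGE 1 (g j)) (f : MvPowerSeries (Fin n) K) :
    Dt (sub g f) = ∑ j, Dt (g j) * sub g (pd j f) := by
  classical
  have hg0 : ∀ j, MvPowerSeries.coeff (R := PowerSeries K) 0 (Dt (g j)) = 0 := fun j => by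
    rw [coeff_Dt, hg j 0 (by rw [deg_zero]; omega), map_zero]
  refine MvPowerSeries.ext fun e => ?_
  rw [map_sum (MvPowerSeries.coeff (R := PowerSeries K) e), coeff_Dt, coeff_sub, map_sum]
  have stepd : ∀ d ∈ Finset.Iic (box e),
      PowerSeries.derivative K (PowerSeries.C (R := K) (MvPowerSeries.coeff (R := K) d f) *
        MvPowerSeries.coeff (R := PowerSeries K) e (∏ j, g j ^ d j))
      = ∑ j, ∑ p ∈ Finset.HasAntidiagonal.antidiagonal e,
          ((d j : PowerSeries K) * (PowerSeries.C (R := K) (MvPowerSeries.coeff (R := K) d f) *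
            (MvPowerSeries.coeff (R := PowerSeries K) p.1 (Dt (g j)) *
             MvPowerSeries.coeff (R := PowerSeries K) p.2
               (∏ l, g l ^ (((d - Finsupp.single j 1) : Fin n →₀ ℕ) l))))) := by
    intro d _
    rw [Derivation.leibniz, PowerSeries.derivative_C, smul_zero, add_zero, smul_eq_mul]
    rw [show PowerSeries.derivative K (MvPowerSeries.coeff (R := PowerSeries K) e (∏ j, g j ^ d j))
        = MvPowerSeries.coeff (R := PowerSeries K) e (Dt (∏ j, g j ^ d j)) from rfl]
    rw [Dt_prod_pow, map_sum, Finset.mul_sum]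
    refine Finset.sum_congr rfl fun j _ => ?_
    rw [map_nsmul, nsmul_eq_mul, MvPowerSeries.coeff_mul, Finset.mul_sum, Finset.mul_sum]
    refine Finset.sum_congr rfl fun p _ => ?_
    ring
  rw [Finset.sum_congr rfl stepd, Finset.sum_comm]
  refine Finset.sum_congr rfl fun j _ => ?_
  rw [MvPowerSeries.coeff_mul]
  have expand_p : ∀ p ∈ Finset.HasAntidiagonal.antidiagonal e,
      MvPowerSeries.coeff (R := PowerSeries K) p.1 (Dt (g j)) *
        MvPowerSeries.coeff (R := PowerSeries K) p.2 (sub g (pd j f))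
      = ∑ d ∈ Finset.Iic (box e),
          MvPowerSeries.coeff (R := PowerSeries K) p.1 (Dt (g j)) *
            (((d j + 1 : ℕ) : PowerSeries K) *
              (PowerSeries.C (R := K) (MvPowerSeries.coeff (R := K) (d + Finsupp.single j 1) f) *
               MvPowerSeries.coeff (R := PowerSeries K) p.2 (∏ l, g l ^ d l))) := by
    intro p hp
    have hdeg2 : deg p.2 ≤ deg e := by
      have h1 := Finset.HasAntidiagonal.mem_antidiagonal.1 hp
      have h2 : deg p.1 + deg p.2 = deg e := by rw [← deg_add, h1]
      omega
    rw [coeff_sub_eq_sum g hg (pd j f) p.2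
        (S := Finset.Iic (box e))
        (fun d hd => Finset.mem_Iic.2 (le_box_of_deg_le (le_trans hd hdeg2))),
      Finset.mul_sum]
    refine Finset.sum_congr rfl fun d _ => ?_
    rw [coeff_pd, map_nsmul, nsmul_eq_mul]
    ring
  rw [Finset.sum_congr rfl expand_p, Finset.sum_comm]
  -- both sides are sums over d ∈ Iic (box e); reindex the left side by d ↦ d - single j 1
  set S := Finset.Iic (box e) with hSdef
  refine Finset.sum_congr rfl fun p hp => ?_
  have h1 := Finset.HasAntidiagonal.mem_antidiagonal.1 hp
  have h2 : deg p.1 + deg p.2 = deg e := by rw [← deg_add, h1]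
  have hvan2 : ∀ d ∈ S, d ∉ S.filter (fun d => d + Finsupp.single j 1 ∈ S) →
      MvPowerSeries.coeff (R := PowerSeries K) p.1 (Dt (g j)) *
        (((d j + 1 : ℕ) : PowerSeries K) *
          (PowerSeries.C (R := K) (MvPowerSeries.coeff (R := K) (d + Finsupp.single j 1) f) *
           MvPowerSeries.coeff (R := PowerSeries K) p.2 (∏ l, g l ^ d l))) = 0 := by
    intro d hdS hdnot
    have hcond : ¬ (d + Finsupp.single j 1 ∈ S) := fun hc =>
      hdnot (Finset.mem_filter.2 ⟨hdS, hc⟩)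
    have hnotle : ¬ (d + Finsupp.single j 1 ≤ box e) := fun hle =>
      hcond (Finset.mem_Iic.2 hle)
    have hdj : deg e ≤ d j := by
      by_contra hc
      push_neg at hc
      apply hnotle
      refine Finsupp.le_def.2 fun l => ?_
      rcases eq_or_ne l j with rfl | hlj
      · rw [Finsupp.add_apply, Finsupp.single_apply, if_pos rfl, box_apply]
        omega
      · rw [Finsupp.add_apply, Finsupp.single_apply, if_neg (fun hh => hlj hh.symm), add_zero]
        exact Finsupp.le_def.1 (Finset.mem_Iic.1 hdS) l
    rcases lt_or_ge (deg p.2) (deg d) with hlt | hle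
    · rw [ordGE_prod_pow hg d p.2 hlt, mul_zero, mul_zero, mul_zero]
    · have hd1 : deg p.1 = 0 := by
        have := le_trans hdj (le_trans (le_deg d j) hle)
        omega
      rw [deg_eq_zero hd1, hg0 j, zero_mul]
  have hvan1 : ∀ d ∈ S, d ∉ S.filter (fun d => d j ≠ 0) →
      ((d j : PowerSeries K) * (PowerSeries.C (R := K) (MvPowerSeries.coeff (R := K) d f) *
        (MvPowerSeries.coeff (R := PowerSeries K) p.1 (Dt (g j)) *
         MvPowerSeries.coeff (R := PowerSeries K) p.2
           (∏ l, g l ^ (((d - Finsupp.single j 1) : Fin n →₀ ℕ) l))))) = 0 := by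
    intro d hdS hdnot
    have : d j = 0 := by
      by_contra hc
      exact hdnot (Finset.mem_filter.2 ⟨hdS, hc⟩)
    rw [this, Nat.cast_zero, zero_mul]
  rw [← Finset.sum_subset (Finset.filter_subset (fun d => d j ≠ 0) S) hvan1,
    ← Finset.sum_subset (Finset.filter_subset (fun d => d + Finsupp.single j 1 ∈ S) S) hvan2]
  refine Finset.sum_nbij' (fun d => d - Finsupp.single j 1) (fun d => d + Finsupp.single j 1)
    ?_ ?_ ?_ ?_ ?_
  · intro d hd
    rw [Finset.mem_filter] at hd ⊢
    obtain ⟨hdS, hdj⟩ := hd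
    have hle : Finsupp.single j 1 ≤ d := Finsupp.single_le_iff.2 (by omega)
    constructor
    · exact Finset.mem_Iic.2 (le_trans tsub_le_self (Finset.mem_Iic.1 hdS))
    · rw [tsub_add_cancel_of_le hle]
      exact hdS
  · intro d hd
    rw [Finset.mem_filter] at hd ⊢
    obtain ⟨hdS, hdmem⟩ := hd
    refine ⟨hdmem, ?_⟩
    rw [Finsupp.add_apply, Finsupp.single_apply, if_pos rfl]
    omega
  · intro d hd
    rw [Finset.mem_filter] at hd
    exact tsub_add_cancel_of_le (Finsupp.single_le_iff.2 (by omega))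
  · intro d _
    exact add_tsub_cancel_right d (Finsupp.single j 1)
  · intro d hd
    rw [Finset.mem_filter] at hd
    obtain ⟨hdS, hdj⟩ := hd
    have hle : Finsupp.single j 1 ≤ d := Finsupp.single_le_iff.2 (by omega)
    have hcancel : (d - Finsupp.single j 1) + Finsupp.single j 1 = d :=
      tsub_add_cancel_of_le hle
    have hcoord : ((d - Finsupp.single j 1) : Fin n →₀ ℕ) j + 1 = d j := by
      rw [Finsupp.tsub_apply, Finsupp.single_apply, if_pos rfl]
      omega
    rw [hcancel, hcoord]
    ring

end Chunk4b

section Chunk4c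
variable {K : Type*} [CommRing K] [Algebra ℚ K] {n : ℕ}

set_option linter.unusedSectionVars false
set_option maxHeartbeats 1000000

lemma prod_pow_add (g : Fin n → MvPowerSeries (Fin n) (PowerSeries K)) (a b : Fin n →₀ ℕ) :
    (∏ j, g j ^ ((a + b) : Fin n →₀ ℕ) j) = (∏ j, g j ^ a j) * (∏ j, g j ^ b j) := by
  rw [← Finset.prod_mul_distrib]
  refine Finset.prod_congr rfl fun j _ => ?_
  rw [Finsupp.add_apply, pow_add]

lemma sub_mul' (g : Fin n → MvPowerSeries (Fin n) (PowerSeries K))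
    (hg : ∀ j, ordGE 1 (g j)) (f₁ f₂ : MvPowerSeries (Fin n) K) :
    sub g (f₁ * f₂) = sub g f₁ * sub g f₂ := by
  classical
  refine MvPowerSeries.ext fun e => ?_
  set S := Finset.Iic (box e) with hS
  have hRHS : MvPowerSeries.coeff (R := PowerSeries K) e (sub g f₁ * sub g f₂)
      = ∑ d₁ ∈ S, ∑ d₂ ∈ S,
          (PowerSeries.C (R := K) (MvPowerSeries.coeff (R := K) d₁ f₁) *
            PowerSeries.C (R := K) (MvPowerSeries.coeff (R := K) d₂ f₂) *
            MvPowerSeries.coeff (R := PowerSeries K) e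
              ((∏ j, g j ^ d₁ j) * (∏ j, g j ^ d₂ j))) := by
    rw [MvPowerSeries.coeff_mul]
    have hp : ∀ p ∈ Finset.HasAntidiagonal.antidiagonal e,
        MvPowerSeries.coeff (R := PowerSeries K) p.1 (sub g f₁) *
          MvPowerSeries.coeff (R := PowerSeries K) p.2 (sub g f₂)
        = ∑ d₁ ∈ S, ∑ d₂ ∈ S,
            (PowerSeries.C (R := K) (MvPowerSeries.coeff (R := K) d₁ f₁) *
              MvPowerSeries.coeff (R := PowerSeries K) p.1 (∏ j, g j ^ d₁ j)) *
            (PowerSeries.C (R := K) (MvPowerSeries.coeff (R := K) d₂ f₂) *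
              MvPowerSeries.coeff (R := PowerSeries K) p.2 (∏ j, g j ^ d₂ j)) := by
      intro p hp
      have h1 := Finset.HasAntidiagonal.mem_antidiagonal.1 hp
      have h2 : deg p.1 + deg p.2 = deg e := by rw [← deg_add, h1]
      rw [coeff_sub_eq_sum g hg f₁ p.1 (S := S)
          (fun d hd => Finset.mem_Iic.2 (le_box_of_deg_le (by omega))),
        coeff_sub_eq_sum g hg f₂ p.2 (S := S)
          (fun d hd => Finset.mem_Iic.2 (le_box_of_deg_le (by omega))),
        Finset.sum_mul_sum]
    rw [Finset.sum_congr rfl hp, Finset.sum_comm]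
    refine Finset.sum_congr rfl fun d₁ _ => ?_
    rw [Finset.sum_comm]
    refine Finset.sum_congr rfl fun d₂ _ => ?_
    rw [MvPowerSeries.coeff_mul, Finset.mul_sum]
    refine Finset.sum_congr rfl fun p _ => ?_
    ring
  have hLHS : MvPowerSeries.coeff (R := PowerSeries K) e (sub g (f₁ * f₂))
      = ∑ y ∈ (S ×ˢ S).filter (fun y => y.1 + y.2 ∈ S),
          (PowerSeries.C (R := K) (MvPowerSeries.coeff (R := K) y.1 f₁) *
            PowerSeries.C (R := K) (MvPowerSeries.coeff (R := K) y.2 f₂) *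
            MvPowerSeries.coeff (R := PowerSeries K) e
              ((∏ j, g j ^ y.1 j) * (∏ j, g j ^ y.2 j))) := by
    rw [coeff_sub]
    have lhs1 : ∀ d ∈ S,
        PowerSeries.C (R := K) (MvPowerSeries.coeff (R := K) d (f₁ * f₂)) *
          MvPowerSeries.coeff (R := PowerSeries K) e (∏ j, g j ^ d j)
        = ∑ q ∈ Finset.HasAntidiagonal.antidiagonal d,
            (PowerSeries.C (R := K) (MvPowerSeries.coeff (R := K) q.1 f₁) *
              PowerSeries.C (R := K) (MvPowerSeries.coeff (R := K) q.2 f₂) *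
              MvPowerSeries.coeff (R := PowerSeries K) e
                ((∏ j, g j ^ q.1 j) * (∏ j, g j ^ q.2 j))) := by
      intro d _
      rw [MvPowerSeries.coeff_mul, map_sum, Finset.sum_mul]
      refine Finset.sum_congr rfl fun q hq => ?_
      have hq1 : q.1 + q.2 = d := Finset.HasAntidiagonal.mem_antidiagonal.1 hq
      rw [map_mul, ← hq1, prod_pow_add]
    rw [Finset.sum_congr rfl lhs1, Finset.sum_sigma']
    refine Finset.sum_nbij' (fun x => (x.2.1, x.2.2)) (fun y => ⟨y.1 + y.2, (y.1, y.2)⟩)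
      ?_ ?_ ?_ ?_ ?_
    · rintro ⟨d, q₁, q₂⟩ hx
      rw [Finset.mem_sigma] at hx
      obtain ⟨hdS, hq⟩ := hx
      have hq1 : q₁ + q₂ = d := Finset.HasAntidiagonal.mem_antidiagonal.1 hq
      rw [Finset.mem_filter, Finset.mem_product]
      have hd : d ≤ box e := Finset.mem_Iic.1 hdS
      refine ⟨⟨?_, ?_⟩, ?_⟩
      · refine Finset.mem_Iic.2 (le_trans ?_ hd)
        rw [← hq1]
        exact self_le_add_right q₁ q₂
      · refine Finset.mem_Iic.2 (le_trans ?_ hd)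
        rw [← hq1]
        exact self_le_add_left q₂ q₁
      · show q₁ + q₂ ∈ S
        rw [hq1]; exact hdS
    · rintro ⟨y₁, y₂⟩ hy
      rw [Finset.mem_filter, Finset.mem_product] at hy
      rw [Finset.mem_sigma]
      exact ⟨hy.2, Finset.HasAntidiagonal.mem_antidiagonal.2 rfl⟩
    · rintro ⟨d, q₁, q₂⟩ hx
      rw [Finset.mem_sigma] at hx
      have hq1 : q₁ + q₂ = d := Finset.HasAntidiagonal.mem_antidiagonal.1 hx.2
      simp only []
      congr 1 <;> rw [hq1]
    · rintro ⟨y₁, y₂⟩ _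
      rfl
    · rintro ⟨d, q₁, q₂⟩ _
      rfl
  rw [hLHS, hRHS, Finset.sum_subset (Finset.filter_subset _ _), Finset.sum_product]
  intro y hy hynot
  rw [Finset.mem_product] at hy
  have hcond : y.1 + y.2 ∉ S := fun hc => hynot (Finset.mem_filter.2 ⟨Finset.mem_product.2 hy, hc⟩)
  have hlt : deg e < deg y.1 + deg y.2 := by
    rw [← deg_add]
    exact deg_lt_of_not_le_box (fun hle => hcond (Finset.mem_Iic.2 hle))
  rw [ordGE_mul (ordGE_prod_pow hg y.1) (ordGE_prod_pow hg y.2) e hlt, mul_zero]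

end Chunk4c

section Chunk5
variable {K : Type*} [CommRing K] [Algebra ℚ K] {n : ℕ}

set_option linter.unusedSectionVars false
set_option maxHeartbeats 1000000

/-- `w_{k+1} = (JH)^k H` -/
def wvec (H : Fin n → MvPowerSeries (Fin n) K) (k : ℕ) (j : Fin n) :
    MvPowerSeries (Fin n) K :=
  ((Matrix.of fun a b => pd b (H a)) ^ k).mulVec H j

lemma wvec_zero (H : Fin n → MvPowerSeries (Fin n) K) (j : Fin n) : wvec H 0 j = H j := by
  rw [wvec, pow_zero, Matrix.one_mulVec]

lemma wvec_succ (H : Fin n → MvPowerSeries (Fin n) K) (k : ℕ) (j : Fin n) :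
    wvec H (k + 1) j = ∑ l, wvec H k l * pd l (H j) := by
  rw [wvec, pow_succ', ← Matrix.mulVec_mulVec]
  simp only [Matrix.mulVec, dotProduct, Matrix.of_apply]
  exact Finset.sum_congr rfl fun l _ => mul_comm _ _

lemma psiOp_eq (H : Fin n → MvPowerSeries (Fin n) K) (k : ℕ) (f : MvPowerSeries (Fin n) K) :
    psiOp H (k + 1) f = ∑ j, wvec H k j * pd j f := rfl

/-- pure index shuffle for triple sums -/
lemma triple_shuffle {M : Type*} [AddCommMonoid M] (a : ℕ) (T : ℕ → ℕ → ℕ → M) :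
    ∑ b ∈ Finset.range (a + 1), ∑ q ∈ Finset.range (b + 1), T q (b - q) (a - b)
      = ∑ q ∈ Finset.range (a + 1), ∑ v ∈ Finset.range (a - q + 1), T q v (a - q - v) := by
  have step1 : ∀ b ∈ Finset.range (a + 1),
      (∑ q ∈ Finset.range (b + 1), T q (b - q) (a - b))
        = ∑ q ∈ Finset.range (a + 1), if q ≤ b then T q (b - q) (a - b) else 0 := by
    intro b hb
    rw [Finset.mem_range] at hb
    have h1 : (∑ q ∈ Finset.range (b + 1), T q (b - q) (a - b))
        = ∑ q ∈ Finset.range (b + 1), if q ≤ b then T q (b - q) (a - b) else 0 := by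
      refine Finset.sum_congr rfl fun q hq => ?_
      rw [Finset.mem_range] at hq
      rw [if_pos (by omega)]
    rw [h1]
    refine Finset.sum_subset (Finset.range_subset_range.2 (by omega)) ?_
    intro q _ hq
    rw [Finset.mem_range] at hq
    rw [if_neg (by omega)]
  rw [Finset.sum_congr rfl step1, Finset.sum_comm]
  refine Finset.sum_congr rfl fun q hq => ?_
  rw [Finset.mem_range] at hq
  rw [← Finset.sum_filter]
  have hIco : Finset.filter (fun b => q ≤ b) (Finset.range (a + 1)) = Finset.Ico q (a + 1) := by
    ext b
    simp only [Finset.mem_filter, Finset.mem_range, Finset.mem_Ico]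
    omega
  rw [hIco, Finset.sum_Ico_eq_sum_range]
  have hlen : a + 1 - q = a - q + 1 := by omega
  rw [hlen]
  refine Finset.sum_congr rfl fun v hv => ?_
  rw [Finset.mem_range] at hv
  congr 1 <;> omega

section WithAll

variable (H : Fin n → MvPowerSeries (Fin n) K) (N : ℕ → Fin n → MvPowerSeries (Fin n) K)
variable (hH : ∀ i (e : Fin n →₀ ℕ), (e.sum fun _ k => k) ≤ 1 →
      MvPowerSeries.coeff (R := K) e (H i) = 0)
variable (hFG : ∀ (i : Fin n) (e : Fin n →₀ ℕ),
      substCoeff (Fcomp H i) (Gcomp N) e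
        = MvPowerSeries.coeff (R := PowerSeries K) e (MvPowerSeries.X i))
variable (hGF : ∀ (i : Fin n) (e : Fin n →₀ ℕ),
      substCoeff (Gcomp N i) (Fcomp H) e
        = MvPowerSeries.coeff (R := PowerSeries K) e (MvPowerSeries.X i))

include hH hFG hGF

lemma DtGcomp (j : Fin n) :
    Dt (Gcomp N j) = sub (Gcomp N) (H j)
      + MvPowerSeries.C (σ := Fin n) (R := PowerSeries K) PowerSeries.X *
          ∑ l, Dt (Gcomp N l) * sub (Gcomp N) (pd l (H j)) := by
  conv_lhs => rw [Gcomp_eq H N hH hFG hGF j]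
  rw [Dt_add, Dt_X, zero_add, Dt_t_mul, Dt_sub (Gcomp N) (ordGE_one_Gcomp H N hGF) (H j)]

lemma slice_DtGcomp : ∀ (a : ℕ) (j : Fin n),
    slice a (Dt (Gcomp N j))
      = ∑ q ∈ Finset.range (a + 1), slice (a - q) (sub (Gcomp N) (wvec H q j)) := by
  intro a
  induction a using Nat.strong_induction_on with
  | _ a ih =>
    intro j
    rw [DtGcomp H N hH hFG hGF j, slice_add]
    cases a with
    | zero =>
        rw [slice_zero_t_mul, add_zero, Finset.sum_range_one, wvec_zero, Nat.sub_zero]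
    | succ a' =>
        rw [slice_succ_t_mul, slice_sum,
          Finset.sum_range_succ'
            (fun q => slice (a' + 1 - q) (sub (Gcomp N) (wvec H q j))) (a' + 1)]
        have expand : ∀ q ∈ Finset.range (a' + 1),
            slice (a' + 1 - (q + 1)) (sub (Gcomp N) (wvec H (q + 1) j))
              = ∑ l, ∑ v ∈ Finset.range (a' - q + 1),
                  slice v (sub (Gcomp N) (wvec H q l)) *
                    slice (a' - q - v) (sub (Gcomp N) (pd l (H j))) := by
          intro q hq
          have hidx : a' + 1 - (q + 1) = a' - q := by omega
          rw [hidx, wvec_succ, sub_sum, slice_sum]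
          refine Finset.sum_congr rfl fun l _ => ?_
          rw [sub_mul' (Gcomp N) (ordGE_one_Gcomp H N hGF), slice_mul,
            Finset.Nat.sum_antidiagonal_eq_sum_range_succ_mk]
        have expand2 : ∀ l ∈ (Finset.univ : Finset (Fin n)),
            slice a' (Dt (Gcomp N l) * sub (Gcomp N) (pd l (H j)))
              = ∑ b ∈ Finset.range (a' + 1), ∑ q ∈ Finset.range (b + 1),
                  (slice (b - q) (sub (Gcomp N) (wvec H q l)) *
                    slice (a' - b) (sub (Gcomp N) (pd l (H j)))) := by
          intro l _
          rw [slice_mul, Finset.Nat.sum_antidiagonal_eq_sum_range_succ_mk]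
          refine Finset.sum_congr rfl fun b hb => ?_
          rw [Finset.mem_range] at hb
          rw [ih b (by omega) l, Finset.sum_mul]
        have hmain : (∑ l, slice a' (Dt (Gcomp N l) * sub (Gcomp N) (pd l (H j))))
            = ∑ q ∈ Finset.range (a' + 1),
                slice (a' + 1 - (q + 1)) (sub (Gcomp N) (wvec H (q + 1) j)) := by
          rw [Finset.sum_congr rfl expand2]
          rw [Finset.sum_congr rfl (fun l _ => triple_shuffle a'
            (fun q v u => slice v (sub (Gcomp N) (wvec H q l)) *
              slice u (sub (Gcomp N) (pd l (H j)))))]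
          rw [Finset.sum_comm, Finset.sum_congr rfl expand]
        rw [hmain, add_comm, wvec_zero, Nat.sub_zero]

end WithAll
end Chunk5

section Chunk6a
variable {K : Type*} [CommRing K] [Algebra ℚ K] {n : ℕ}

set_option linter.unusedSectionVars false
set_option maxHeartbeats 1000000

lemma dropLast_append_getLastD {l : List ℕ} (h : l ≠ []) :
    l.dropLast ++ [l.getLastD 0] = l := by
  cases l with
  | nil => exact absurd rfl h
  | cons a l' =>
      have h2 := List.dropLast_append_getLast (l := a :: l') (by simp)
      rwa [List.getLast_eq_getLastD, ← List.getLastD_cons] at h2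

lemma getLastD_mem {l : List ℕ} (h : l ≠ []) : l.getLastD 0 ∈ l := by
  cases l with
  | nil => exact absurd rfl h
  | cons a l' =>
      rw [List.getLastD_cons, ← List.getLast_eq_getLastD]
      exact List.getLast_mem h

lemma piu_append (L : List ℕ) (k : ℕ) : piu (L ++ [k]) = piu L * (L.sum + k) := by
  rw [piu, piu, List.length_append, List.length_singleton, List.range_succ, List.map_append,
    List.prod_append]
  congr 1
  · congr 1
    refine List.map_congr_left fun j hj => ?_
    rw [List.mem_range] at hj
    rw [List.take_append_of_le_length (by omega)]
  · simp only [List.map_cons, List.map_nil, List.prod_cons, List.prod_nil, mul_one]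
    rw [List.take_of_length_le (by simp), List.sum_append]
    simp

lemma foldr_comp_apply {α : Type*} (L : List (α → α)) (g : α → α) (x : α) :
    L.foldr (· ∘ ·) g x = L.foldr (· ∘ ·) id (g x) := by
  induction L with
  | nil => rfl
  | cons a L ih =>
      show a (L.foldr (· ∘ ·) g x) = a (L.foldr (· ∘ ·) id (g x))
      rw [ih]

lemma foldr_append_apply (H : Fin n → MvPowerSeries (Fin n) K) (L : List ℕ) (k : ℕ)
    (f : MvPowerSeries (Fin n) K) :
    (((L ++ [k]).map (psiOp H)).foldr (· ∘ ·) id) f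
      = ((L.map (psiOp H)).foldr (· ∘ ·) id) (psiOp H k f) := by
  rw [List.map_append, List.foldr_append]
  show (List.map (psiOp H) L).foldr (· ∘ ·) (psiOp H k ∘ id) f = _
  rw [foldr_comp_apply]
  rfl

/-- compositions of `m`, as a finset of lists -/
def compSet (m : ℕ) : Finset (List ℕ) :=
  Finset.image Composition.blocks (Finset.univ : Finset (Composition m))

lemma mem_compSet {m : ℕ} {l : List ℕ} :
    l ∈ compSet m ↔ (∀ i ∈ l, 0 < i) ∧ l.sum = m := by
  constructor
  · intro hl
    obtain ⟨I, _, rfl⟩ := Finset.mem_image.1 hl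
    exact ⟨fun i hi => I.blocks_pos hi, I.blocks_sum⟩
  · intro ⟨h1, h2⟩
    exact Finset.mem_image.2 ⟨⟨l, fun {i} hi => h1 i hi, h2⟩, Finset.mem_univ _, rfl⟩

/-- the operator `T_m` -/
def opT (H : Fin n → MvPowerSeries (Fin n) K) (m : ℕ) (f : MvPowerSeries (Fin n) K) :
    MvPowerSeries (Fin n) K :=
  ∑ I : Composition m, ((piu I.blocks : ℚ)⁻¹) •
    ((I.blocks.map (psiOp H)).foldr (· ∘ ·) id) f

lemma opT_eq_list (H : Fin n → MvPowerSeries (Fin n) K) (m : ℕ)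
    (f : MvPowerSeries (Fin n) K) :
    opT H m f = ∑ l ∈ compSet m,
      ((piu l : ℚ)⁻¹) • ((l.map (psiOp H)).foldr (· ∘ ·) id) f := by
  rw [opT, compSet, Finset.sum_image (fun x _ y _ h => Composition.ext h)]

lemma compSet_zero : compSet 0 = {[]} := by
  ext l
  rw [mem_compSet, Finset.mem_singleton]
  constructor
  · intro ⟨h1, h2⟩
    cases l with
    | nil => rfl
    | cons a l' =>
        have := h1 a List.mem_cons_self
        rw [List.sum_cons] at h2
        omega
  · rintro rfl
    exact ⟨fun i hi => absurd hi List.not_mem_nil, rfl⟩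

lemma opT_zero (H : Fin n → MvPowerSeries (Fin n) K) (f : MvPowerSeries (Fin n) K) :
    opT H 0 f = f := by
  rw [opT_eq_list, compSet_zero, Finset.sum_singleton]
  simp [piu]

lemma opT_rec (H : Fin n → MvPowerSeries (Fin n) K) (m : ℕ) (f : MvPowerSeries (Fin n) K) :
    ∑ q ∈ Finset.range (m + 1), opT H (m - q) (psiOp H (q + 1) f)
      = ((m + 1 : ℕ) : ℚ) • opT H (m + 1) f := by
  rw [opT_eq_list, Finset.smul_sum]
  have hterm : ∀ l ∈ compSet (m + 1),
      ((m + 1 : ℕ) : ℚ) • (((piu l : ℚ)⁻¹) • ((l.map (psiOp H)).foldr (· ∘ ·) id) f)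
        = (((m + 1 : ℕ) : ℚ) * (piu l : ℚ)⁻¹) • ((l.map (psiOp H)).foldr (· ∘ ·) id) f := by
    intro l _
    rw [smul_smul]
  rw [Finset.sum_congr rfl hterm]
  have hexp : ∀ q ∈ Finset.range (m + 1),
      opT H (m - q) (psiOp H (q + 1) f)
        = ∑ l ∈ compSet (m - q),
            ((piu l : ℚ)⁻¹) • ((l.map (psiOp H)).foldr (· ∘ ·) id) (psiOp H (q + 1) f) := by
    intro q _
    rw [opT_eq_list]
  rw [Finset.sum_congr rfl hexp, Finset.sum_sigma']
  refine Finset.sum_bij' (i := fun x _ => x.2 ++ [x.1 + 1])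
    (j := fun l _ => (⟨l.getLastD 0 - 1, l.dropLast⟩ : (_ : ℕ) × List ℕ)) ?_ ?_ ?_ ?_ ?_
  · rintro ⟨q, l'⟩ hx
    dsimp only
    simp only [Finset.mem_sigma, Finset.mem_range, mem_compSet] at hx
    obtain ⟨hq, hl'⟩ := hx
    rw [mem_compSet]
    constructor
    · intro i hi
      rcases List.mem_append.1 hi with h | h
      · exact hl'.1 i h
      · rw [List.mem_singleton] at h
        omega
    · rw [List.sum_append, hl'.2, List.sum_cons, List.sum_nil]
      omega
  · intro l hl
    rw [mem_compSet] at hl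
    have hne : l ≠ [] := by
      intro hnil
      rw [hnil, List.sum_nil] at hl
      omega
    have hpos : 0 < l.getLastD 0 := hl.1 _ (getLastD_mem hne)
    have hsum : l.dropLast.sum + l.getLastD 0 = m + 1 := by
      have := dropLast_append_getLastD hne
      calc l.dropLast.sum + l.getLastD 0
          = (l.dropLast ++ [l.getLastD 0]).sum := by
            rw [List.sum_append, List.sum_cons, List.sum_nil, add_zero]
        _ = l.sum := by rw [this]
        _ = m + 1 := hl.2
    have hle : l.getLastD 0 ≤ m + 1 := by omega
    simp only [Finset.mem_sigma, Finset.mem_range, mem_compSet]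
    refine ⟨by omega, fun i hi => hl.1 i (List.dropLast_subset l hi), by omega⟩
  · rintro ⟨q, l'⟩ hx
    show (⟨(l' ++ [q + 1]).getLastD 0 - 1, (l' ++ [q + 1]).dropLast⟩ : (_ : ℕ) × List ℕ)
        = ⟨q, l'⟩
    rw [List.dropLast_concat]
    have : (l' ++ [q + 1]).getLastD 0 = q + 1 := by simp
    rw [this]
    rfl
  · intro l hl
    dsimp only
    rw [mem_compSet] at hl
    have hne : l ≠ [] := by
      intro hnil
      rw [hnil, List.sum_nil] at hl
      omega
    have hpos : 0 < l.getLastD 0 := hl.1 _ (getLastD_mem hne)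
    show l.dropLast ++ [l.getLastD 0 - 1 + 1] = l
    rw [show l.getLastD 0 - 1 + 1 = l.getLastD 0 by omega]
    exact dropLast_append_getLastD hne
  · rintro ⟨q, l'⟩ hx
    dsimp only
    simp only [Finset.mem_sigma, Finset.mem_range, mem_compSet] at hx
    obtain ⟨hq, hl'⟩ := hx
    rw [foldr_append_apply, piu_append, hl'.2]
    rw [show m - q + (q + 1) = m + 1 by omega]
    congr 1
    rw [Nat.cast_mul, mul_inv]
    rw [mul_comm ((piu l' : ℚ))⁻¹, ← mul_assoc,
      mul_inv_cancel₀ (by exact_mod_cast Nat.succ_ne_zero m), one_mul]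

end Chunk6a

section Chunk6b
variable {K : Type*} [CommRing K] [Algebra ℚ K] {n : ℕ}

set_option linter.unusedSectionVars false
set_option maxHeartbeats 1000000

variable (H : Fin n → MvPowerSeries (Fin n) K) (N : ℕ → Fin n → MvPowerSeries (Fin n) K)
variable (hH : ∀ i (e : Fin n →₀ ℕ), (e.sum fun _ k => k) ≤ 1 →
      MvPowerSeries.coeff (R := K) e (H i) = 0)
variable (hFG : ∀ (i : Fin n) (e : Fin n →₀ ℕ),
      substCoeff (Fcomp H i) (Gcomp N) e
        = MvPowerSeries.coeff (R := PowerSeries K) e (MvPowerSeries.X i))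
variable (hGF : ∀ (i : Fin n) (e : Fin n →₀ ℕ),
      substCoeff (Gcomp N i) (Fcomp H) e
        = MvPowerSeries.coeff (R := PowerSeries K) e (MvPowerSeries.X i))

include hH hFG hGF

lemma slice_sub_opT : ∀ (m : ℕ) (f : MvPowerSeries (Fin n) K),
    slice m (sub (Gcomp N) f) = opT H m f := by
  intro m
  induction m using Nat.strong_induction_on with
  | _ m ih =>
    intro f
    cases m with
    | zero => rw [slice_zero_sub (Gcomp N) (slice_zero_Gcomp N) f, opT_zero]
    | succ m =>
      have key : ((m + 1 : ℕ) : ℚ) • slice (m + 1) (sub (Gcomp N) f)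
          = ((m + 1 : ℕ) : ℚ) • opT H (m + 1) f := by
        rw [Nat.cast_smul_eq_nsmul, ← slice_Dt, Dt_sub (Gcomp N) (ordGE_one_Gcomp H N hGF) f,
          slice_sum]
        have expand2 : ∀ j ∈ (Finset.univ : Finset (Fin n)),
            slice m (Dt (Gcomp N j) * sub (Gcomp N) (pd j f))
              = ∑ b ∈ Finset.range (m + 1), ∑ q ∈ Finset.range (b + 1),
                  (slice (b - q) (sub (Gcomp N) (wvec H q j)) *
                    slice (m - b) (sub (Gcomp N) (pd j f))) := by
          intro j _
          rw [slice_mul, Finset.Nat.sum_antidiagonal_eq_sum_range_succ_mk]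
          refine Finset.sum_congr rfl fun b hb => ?_
          rw [slice_DtGcomp H N hH hFG hGF b j, Finset.sum_mul]
        rw [Finset.sum_congr rfl expand2]
        rw [Finset.sum_congr rfl (fun j _ => triple_shuffle m
          (fun q v u => slice v (sub (Gcomp N) (wvec H q j)) *
            slice u (sub (Gcomp N) (pd j f))))]
        rw [Finset.sum_comm]
        have expand : ∀ q ∈ Finset.range (m + 1),
            (∑ j, ∑ v ∈ Finset.range (m - q + 1),
                slice v (sub (Gcomp N) (wvec H q j)) *
                  slice (m - q - v) (sub (Gcomp N) (pd j f)))
              = opT H (m - q) (psiOp H (q + 1) f) := by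
          intro q hq
          rw [Finset.mem_range] at hq
          rw [← ih (m - q) (by omega) (psiOp H (q + 1) f)]
          rw [psiOp_eq, sub_sum, slice_sum]
          refine Finset.sum_congr rfl fun j _ => ?_
          rw [sub_mul' (Gcomp N) (ordGE_one_Gcomp H N hGF), slice_mul,
            Finset.Nat.sum_antidiagonal_eq_sum_range_succ_mk]
        rw [Finset.sum_congr rfl expand, opT_rec]
      exact smul_right_injective (MvPowerSeries (Fin n) K)
        (by exact_mod_cast Nat.succ_ne_zero m) key

end Chunk6b

end Stmt17

/-- with `F_t(z) = z - tH(z)` (`H` of order `≥ 2`) and compositional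
inverse `G_t(z) = z + ∑_{m≥1} t^m N_[m](z)`, for every `m ≥ 1` one has the inversion
formula `N_[m](z) = ∑_{I ∈ C_m} (1/π_u(I)) ψ^I z`, where `ψ_k = [((JH)^{k-1}H) ∂/∂z]`
and `ψ^I = ψ_{i_1}∘⋯∘ψ_{i_k}` is applied to `z` componentwise. -/
theorem stmt17 (H : Fin n → MvPowerSeries (Fin n) K)
    (hH : ∀ i (e : Fin n →₀ ℕ), (e.sum fun _ k => k) ≤ 1 →
      MvPowerSeries.coeff (R := K) e (H i) = 0)
    (N : ℕ → Fin n → MvPowerSeries (Fin n) K)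
    (hFG : ∀ (i : Fin n) (e : Fin n →₀ ℕ),
      substCoeff (Fcomp H i) (Gcomp N) e
        = MvPowerSeries.coeff (R := PowerSeries K) e (MvPowerSeries.X i))
    (hGF : ∀ (i : Fin n) (e : Fin n →₀ ℕ),
      substCoeff (Gcomp N i) (Fcomp H) e
        = MvPowerSeries.coeff (R := PowerSeries K) e (MvPowerSeries.X i)) :
    ∀ m, 1 ≤ m → ∀ i, N m i
      = ∑ I : Composition m,
          ((piu I.blocks : ℚ)⁻¹) •
            ((I.blocks.map (psiOp H)).foldr (· ∘ ·) id)
              (MvPowerSeries.X i : MvPowerSeries (Fin n) K) := by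
  intro m hm i
  obtain ⟨m', rfl⟩ : ∃ m', m = m' + 1 := ⟨m - 1, by omega⟩
  have h1 : N (m' + 1) i = Stmt17.slice (m' + 1) (Gcomp N i) :=
    (Stmt17.slice_succ_Gcomp N m' i).symm
  have h2 : Gcomp N i = Stmt17.sub (Gcomp N) (MvPowerSeries.X i) :=
    (Stmt17.sub_X (Gcomp N) (fun j => Stmt17.coeff_zero_Gcomp H N hGF j) i).symm
  rw [h1, h2, Stmt17.slice_sub_opT H N hH hFG hGF (m' + 1) (MvPowerSeries.X i)]
  rfl

end
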